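/- arXiv:2008.01717 — 3 statements merged into one kernel-verified Lean document; each statement's English description precedes it below -/
import Mathlib

section
/- If the permutation w ∈ S_n has an obstruction of Type 1, then w contains at least one of the patterns 21543, 215634, 214635, 215364, 13254. -/
open scoped Classical

universe u

namespace CDGPaper
/-- The Rothe diagram of a permutation `w` of `Fin n` (0-indexed):
`(i,j)` with `w i > j` and `w⁻¹ j > i`. -/
def RotheDiagram {n : ℕ} (w : Equiv.Perm (Fin n)) : Set (Fin n × Fin n) :=
  {p | p.2 < w p.1 ∧ p.1 < w⁻¹ p.2}

/-- The rank function `rank_w(i,j) = #{k ≤ i : w(k) ≤ j}`. -/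
noncomputable def rank {n : ℕ} (w : Equiv.Perm (Fin n)) (i j : Fin n) : ℕ :=
  (Finset.univ.filter fun k => k ≤ i ∧ w k ≤ j).card

/-- The essential set: boxes of the Rothe diagram with no diagram box immediately
south or immediately east. -/
def EssentialSet {n : ℕ} (w : Equiv.Perm (Fin n)) : Set (Fin n × Fin n) :=
  {p | p ∈ RotheDiagram w ∧
    (∀ i' : Fin n, (i' : ℕ) = (p.1 : ℕ) + 1 → (i', p.2) ∉ RotheDiagram w) ∧
    (∀ j' : Fin n, (j' : ℕ) = (p.2 : ℕ) + 1 → (p.1, j') ∉ RotheDiagram w)}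

/-- The dominant part of the Rothe diagram: boxes of rank `0`. -/
def DominantPart {n : ℕ} (w : Equiv.Perm (Fin n)) : Set (Fin n × Fin n) :=
  {p ∈ RotheDiagram w | rank w p.1 p.2 = 0}

/-- A lower outside corner: an essential box with no essential box strictly southeast of it. -/
def IsLowerOutsideCorner {n : ℕ} (w : Equiv.Perm (Fin n)) (p : Fin n × Fin n) : Prop :=
  p ∈ EssentialSet w ∧ ∀ q ∈ EssentialSet w, ¬(p.1 < q.1 ∧ p.2 < q.2)

/-- The Coxeter length of `w`: its number of inversions. -/
noncomputable def coxeterLength {n : ℕ} (w : Equiv.Perm (Fin n)) : ℕ :=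
  (Finset.univ.filter fun p : Fin n × Fin n => p.1 < p.2 ∧ w p.2 < w p.1).card

/-- `w` contains the pattern `v` if some increasing sequence of positions of `w`
has values in the same relative order as `v`. -/
def ContainsPattern {n k : ℕ} (w : Equiv.Perm (Fin n)) (v : Equiv.Perm (Fin k)) : Prop :=
  ∃ f : Fin k → Fin n, StrictMono f ∧ ∀ a b : Fin k, v a < v b ↔ w (f a) < w (f b)

/-- The polynomial ring `ℂ[x_{i,j}]`. -/
abbrev PolyRing (n : ℕ) := MvPolynomial (Fin n × Fin n) ℂ

/-- The generic `n × n` matrix of indeterminates. -/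
noncomputable def genMatrix (n : ℕ) : Matrix (Fin n) (Fin n) (PolyRing n) :=
  fun i j => MvPolynomial.X (i, j)

/-- The generic matrix with the variables in the dominant part of `D_w` set to `0`. -/
noncomputable def cdgMatrix {n : ℕ} (w : Equiv.Perm (Fin n)) :
    Matrix (Fin n) (Fin n) (PolyRing n) :=
  fun i j => if (i, j) ∈ DominantPart w then 0 else MvPolynomial.X (i, j)

/-- The set of `d`-minors of `M` using rows weakly above `i` and columns weakly
left of `j` (the northwest `i × j` submatrix, 0-indexed). -/
def minors {n : ℕ} (M : Matrix (Fin n) (Fin n) (PolyRing n)) (d : ℕ) (i j : Fin n) :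
    Set (PolyRing n) :=
  {f | ∃ (Rs Cs : Finset (Fin n)) (hR : Rs.card = d) (hC : Cs.card = d),
    (∀ a ∈ Rs, a ≤ i) ∧ (∀ b ∈ Cs, b ≤ j) ∧
    f = (M.submatrix (fun a => (Rs.orderIsoOfFin hR a : Fin n))
          (fun b => (Cs.orderIsoOfFin hC b : Fin n))).det}

/-- The Schubert determinantal ideal `I_w`. -/
noncomputable def SchubertIdeal {n : ℕ} (w : Equiv.Perm (Fin n)) : Ideal (PolyRing n) :=
  Ideal.span (⋃ p : Fin n × Fin n, minors (genMatrix n) (rank w p.1 p.2 + 1) p.1 p.2)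

/-- The set of CDG generators `G_w` of `I_w`. -/
noncomputable def CDGgens {n : ℕ} (w : Equiv.Perm (Fin n)) : Set (PolyRing n) :=
  (⋃ p ∈ EssentialSet w \ DominantPart w,
      minors (cdgMatrix w) (rank w p.1 p.2 + 1) p.1 p.2) ∪
    (fun p => MvPolynomial.X p) '' DominantPart w

/-- The leading exponent of a polynomial with respect to a monomial order. -/
noncomputable def leadExp {n : ℕ} (m : MonomialOrder.{0, u} (Fin n × Fin n)) (f : PolyRing n) :
    (Fin n × Fin n) →₀ ℕ :=
  m.toSyn.symm (f.support.sup fun d => m.toSyn d)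

/-- The leading term of a polynomial with respect to a monomial order. -/
noncomputable def leadTerm {n : ℕ} (m : MonomialOrder.{0, u} (Fin n × Fin n)) (f : PolyRing n) :
    PolyRing n :=
  MvPolynomial.monomial (leadExp m f) (f.coeff (leadExp m f))

/-- `G ⊆ I` is a Gröbner basis of `I` if the leading terms of `G` generate the ideal
of leading terms of all elements of `I`. -/
def IsGroebnerBasis {n : ℕ} (m : MonomialOrder.{0, u} (Fin n × Fin n)) (G : Set (PolyRing n))
    (I : Ideal (PolyRing n)) : Prop :=
  G ⊆ (I : Set (PolyRing n)) ∧
    Ideal.span (leadTerm m '' G) = Ideal.span (leadTerm m '' (I : Set (PolyRing n)))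

/-- A diagonal term order: the leading term of the determinant of any square submatrix of
the generic matrix is the product of its main-diagonal entries. -/
def IsDiagonalOrder {n : ℕ} (m : MonomialOrder.{0, u} (Fin n × Fin n)) : Prop :=
  ∀ (d : ℕ) (Rs Cs : Finset (Fin n)) (hR : Rs.card = d) (hC : Cs.card = d),
    leadTerm m
        ((genMatrix n).submatrix (fun a => (Rs.orderIsoOfFin hR a : Fin n))
          (fun b => (Cs.orderIsoOfFin hC b : Fin n))).det =
      ∏ a : Fin d,
        MvPolynomial.X ((Rs.orderIsoOfFin hR a : Fin n), (Cs.orderIsoOfFin hC a : Fin n))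

/-- `w` is CDG if the CDG generators are a Gröbner basis of `I_w` for every diagonal
term order. -/
noncomputable def IsCDG {n : ℕ} (w : Equiv.Perm (Fin n)) : Prop :=
  ∀ m : MonomialOrder.{0, u} (Fin n × Fin n), IsDiagonalOrder m →
    IsGroebnerBasis m (CDGgens w) (SchubertIdeal w)


/-- The eight patterns, as permutations (one-line notations 13254 etc., 0-indexed). -/
noncomputable def p13254 : Equiv.Perm (Fin 5) := Equiv.ofBijective ![0,2,1,4,3] (by decide)
noncomputable def p21543 : Equiv.Perm (Fin 5) := Equiv.ofBijective ![1,0,4,3,2] (by decide)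
noncomputable def p214635 : Equiv.Perm (Fin 6) := Equiv.ofBijective ![1,0,3,5,2,4] (by decide)
noncomputable def p215364 : Equiv.Perm (Fin 6) := Equiv.ofBijective ![1,0,4,2,5,3] (by decide)
noncomputable def p215634 : Equiv.Perm (Fin 6) := Equiv.ofBijective ![1,0,4,5,2,3] (by decide)
noncomputable def p241635 : Equiv.Perm (Fin 6) := Equiv.ofBijective ![1,3,0,5,2,4] (by decide)
noncomputable def p315264 : Equiv.Perm (Fin 6) := Equiv.ofBijective ![2,0,4,1,5,3] (by decide)
noncomputable def p4261735 : Equiv.Perm (Fin 7) :=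
  Equiv.ofBijective ![3,1,5,0,6,2,4] (by decide)

/-- `w` avoids all eight of the patterns of [HPW, Conjecture 7.1]. -/
noncomputable def AvoidsAllEight {n : ℕ} (w : Equiv.Perm (Fin n)) : Prop :=
  ¬ContainsPattern w p13254 ∧ ¬ContainsPattern w p21543 ∧ ¬ContainsPattern w p214635 ∧
    ¬ContainsPattern w p215364 ∧ ¬ContainsPattern w p215634 ∧ ¬ContainsPattern w p241635 ∧
    ¬ContainsPattern w p315264 ∧ ¬ContainsPattern w p4261735

/-- Obstruction of Type 1. -/
def HasType1Obstruction {n : ℕ} (w : Equiv.Perm (Fin n)) : Prop :=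
  ∃ rs ∈ DominantPart w ∩ EssentialSet w, ∃ p q : Fin n × Fin n,
    p ∈ RotheDiagram w ∧ q ∈ RotheDiagram w ∧ p ≠ q ∧
    rs.1 < p.1 ∧ rs.2 < p.2 ∧ rs.1 < q.1 ∧ rs.2 < q.2 ∧ p.1 ≠ q.1 ∧ p.2 ≠ q.2

/-- Obstruction of Type 2. -/
noncomputable def HasType2Obstruction {n : ℕ} (w : Equiv.Perm (Fin n)) : Prop :=
  ∃ rs ∈ DominantPart w ∩ EssentialSet w,
    (∃ i j j' : Fin n, (i, j) ∈ EssentialSet w ∧ (i, j') ∈ EssentialSet w ∧ j ≠ j' ∧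
        rs.1 < i ∧ rs.2 < j ∧ rs.2 < j' ∧
        (Finset.univ.filter fun k => (k, j) ∈ DominantPart w).max =
          (Finset.univ.filter fun k => (k, j') ∈ DominantPart w).max) ∨
      (∃ i i' j : Fin n, (i, j) ∈ EssentialSet w ∧ (i', j) ∈ EssentialSet w ∧ i ≠ i' ∧
        rs.1 < i ∧ rs.1 < i' ∧ rs.2 < j ∧
        (Finset.univ.filter fun l => (i, l) ∈ DominantPart w).max =
          (Finset.univ.filter fun l => (i', l) ∈ DominantPart w).max)

/-- Obstruction of Type 3. -/
def HasType3Obstruction {n : ℕ} (w : Equiv.Perm (Fin n)) : Prop :=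
  ∃ p q : Fin n × Fin n, p ∈ EssentialSet w \ DominantPart w ∧
    q ∈ EssentialSet w \ DominantPart w ∧ p.1 < q.1 ∧ p.2 < q.2

/-- `f` involves the variable `v` (some term of `f` is divisible by `x_v`). -/
def involvesVar {n : ℕ} (v : Fin n × Fin n) (f : PolyRing n) : Prop :=
  ∃ d ∈ f.support, d v ≠ 0

/-- For `f = y·q + r`, with `y = x_v` dividing no term of `q` or `r`, the polynomial `q`:
strip `y` from the terms of `f` divisible by `y`. -/
noncomputable def qPart {n : ℕ} (v : Fin n × Fin n) (f : PolyRing n) : PolyRing n :=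
  ∑ d ∈ f.support.filter fun d => d v ≠ 0,
    MvPolynomial.monomial (d - Finsupp.single v (d v)) (f.coeff d)

/-- The ideal `N_{y,I_w}`, generated by the CDG generators not involving `y = x_v`. -/
noncomputable def NIdeal {n : ℕ} (w : Equiv.Perm (Fin n)) (v : Fin n × Fin n) :
    Ideal (PolyRing n) :=
  Ideal.span {g ∈ CDGgens w | ¬involvesVar v g}

/-- The generators `{q_1, …, q_k, h_1, …, h_ℓ}` of `C_{y,I_w}`. -/
noncomputable def Cgens {n : ℕ} (w : Equiv.Perm (Fin n)) (v : Fin n × Fin n) :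
    Set (PolyRing n) :=
  qPart v '' {g ∈ CDGgens w | involvesVar v g} ∪ {g ∈ CDGgens w | ¬involvesVar v g}

/-- `m_1`. -/
noncomputable def mOne {n : ℕ} (w : Equiv.Perm (Fin n)) (i j : Fin n) : ℕ :=
  if ∃ p : Fin n, (p : ℕ) = 0 ∧ (p, j) ∈ DominantPart w then
    sInf {d : ℕ | ∃ p : Fin n, (p, j) ∈ DominantPart w ∧ d = (i : ℕ) - (p : ℕ)}
  else (i : ℕ) + 1

/-- `m_2`. -/
noncomputable def mTwo {n : ℕ} (w : Equiv.Perm (Fin n)) (i j : Fin n) : ℕ :=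
  if ∃ q : Fin n, (q : ℕ) = 0 ∧ (i, q) ∈ DominantPart w then
    sInf {d : ℕ | ∃ q : Fin n, (i, q) ∈ DominantPart w ∧ d = (j : ℕ) - (q : ℕ)}
  else (j : ℕ) + 1

/-- `h` is a CDG generator determined by an essential box in row `i` or column `j`:
all its variables lie weakly northwest of an essential box `(i',j)` or `(i,j')` whose rank
condition matches its degree. -/
def IsRowColGen {n : ℕ} (w : Equiv.Perm (Fin n)) (i j : Fin n) (h : PolyRing n) : Prop :=
  (∃ i' : Fin n, (i', j) ∈ EssentialSet w ∧ rank w i' j + 1 = h.totalDegree ∧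
      ∀ p ∈ h.vars, p.1 ≤ i' ∧ p.2 ≤ j) ∨
    (∃ j' : Fin n, (i, j') ∈ EssentialSet w ∧ rank w i j' + 1 = h.totalDegree ∧
      ∀ p ∈ h.vars, p.1 ≤ i ∧ p.2 ≤ j')

/-- The CDG generators of the ideal `Q_{y,I_w}` for `y = x_{i,j}`. -/
noncomputable def Qgens {n : ℕ} (w : Equiv.Perm (Fin n)) (i j : Fin n) : Set (PolyRing n) :=
  qPart (i, j) '' {g ∈ CDGgens w | involvesVar (i, j) g} ∪
    (if rank w i j + 1 = min (mOne w i j) (mTwo w i j) then ∅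
      else {h ∈ CDGgens w | ¬involvesVar (i, j) h ∧ IsRowColGen w i j h})





lemma vec6_five {α : Type*} (a b c d e f : α) : ![a, b, c, d, e, f] (5 : Fin 6) = f := rfl

lemma build {n k : ℕ} (w : Equiv.Perm (Fin n)) (v : Equiv.Perm (Fin k)) (f : Fin k → Fin n)
    (h1 : ∀ a b : Fin k, a < b → f a < f b)
    (h2 : ∀ a b : Fin k, v a < v b → w (f a) < w (f b)) :
    ContainsPattern w v := by
  refine ⟨f, fun a b hab => h1 a b hab, fun a b => ⟨h2 a b, fun hw => ?_⟩⟩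
  rcases lt_trichotomy (v a) (v b) with h | h | h
  · exact h
  · exact absurd (congrArg w (congrArg f (v.injective h))) (ne_of_lt hw)
  · exact absurd hw (lt_asymm (h2 b a h))

lemma l21543 {n : ℕ} (w : Equiv.Perm (Fin n)) (B A x y z : Fin n)
    (h1 : B < A) (h2 : A < x) (h3 : x < y) (h4 : y < z)
    (v1 : w A < w B) (v2 : w B < w z) (v3 : w z < w y) (v4 : w y < w x) :
    ContainsPattern w p21543 := by
  apply build w p21543 ![B, A, x, y, z]
  · intro a b hab
    simp only [Fin.lt_def] at h1 h2 h3 h4 ⊢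
    fin_cases a <;> fin_cases b <;> simp_all [vec6_five] <;> omega
  · intro a b hab
    simp only [Fin.lt_def] at v1 v2 v3 v4 ⊢
    fin_cases a <;> fin_cases b <;> simp_all [p21543] <;> omega

lemma l13254 {n : ℕ} (w : Equiv.Perm (Fin n)) (A x1 x2 x3 x4 : Fin n)
    (h1 : A < x1) (h2 : x1 < x2) (h3 : x2 < x3) (h4 : x3 < x4)
    (v1 : w A < w x2) (v2 : w x2 < w x1) (v3 : w x1 < w x4) (v4 : w x4 < w x3) :
    ContainsPattern w p13254 := by
  apply build w p13254 ![A, x1, x2, x3, x4]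
  · intro a b hab
    simp only [Fin.lt_def] at h1 h2 h3 h4 ⊢
    fin_cases a <;> fin_cases b <;> simp_all [vec6_five] <;> omega
  · intro a b hab
    simp only [Fin.lt_def] at v1 v2 v3 v4 ⊢
    fin_cases a <;> fin_cases b <;> simp_all [p13254] <;> omega

lemma l215634 {n : ℕ} (w : Equiv.Perm (Fin n)) (B A x1 x2 x3 x4 : Fin n)
    (h1 : B < A) (h2 : A < x1) (h3 : x1 < x2) (h4 : x2 < x3) (h5 : x3 < x4)
    (v1 : w A < w B) (v2 : w B < w x3) (v3 : w x3 < w x4) (v4 : w x4 < w x1)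
    (v5 : w x1 < w x2) :
    ContainsPattern w p215634 := by
  apply build w p215634 ![B, A, x1, x2, x3, x4]
  · intro a b hab
    simp only [Fin.lt_def] at h1 h2 h3 h4 h5 ⊢
    fin_cases a <;> fin_cases b <;> simp_all [vec6_five] <;> omega
  · intro a b hab
    simp only [Fin.lt_def] at v1 v2 v3 v4 v5 ⊢
    fin_cases a <;> fin_cases b <;> simp_all [p215634, vec6_five] <;> omega

lemma l214635 {n : ℕ} (w : Equiv.Perm (Fin n)) (B A x1 x2 x3 x4 : Fin n)
    (h1 : B < A) (h2 : A < x1) (h3 : x1 < x2) (h4 : x2 < x3) (h5 : x3 < x4)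
    (v1 : w A < w B) (v2 : w B < w x3) (v3 : w x3 < w x1) (v4 : w x1 < w x4)
    (v5 : w x4 < w x2) :
    ContainsPattern w p214635 := by
  apply build w p214635 ![B, A, x1, x2, x3, x4]
  · intro a b hab
    simp only [Fin.lt_def] at h1 h2 h3 h4 h5 ⊢
    fin_cases a <;> fin_cases b <;> simp_all [vec6_five] <;> omega
  · intro a b hab
    simp only [Fin.lt_def] at v1 v2 v3 v4 v5 ⊢
    fin_cases a <;> fin_cases b <;> simp_all [p214635, vec6_five] <;> omega

lemma l215364 {n : ℕ} (w : Equiv.Perm (Fin n)) (B A x1 x2 x3 x4 : Fin n)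
    (h1 : B < A) (h2 : A < x1) (h3 : x1 < x2) (h4 : x2 < x3) (h5 : x3 < x4)
    (v1 : w A < w B) (v2 : w B < w x2) (v3 : w x2 < w x4) (v4 : w x4 < w x1)
    (v5 : w x1 < w x3) :
    ContainsPattern w p215364 := by
  apply build w p215364 ![B, A, x1, x2, x3, x4]
  · intro a b hab
    simp only [Fin.lt_def] at h1 h2 h3 h4 h5 ⊢
    fin_cases a <;> fin_cases b <;> simp_all [vec6_five] <;> omega
  · intro a b hab
    simp only [Fin.lt_def] at v1 v2 v3 v4 v5 ⊢
    fin_cases a <;> fin_cases b <;> simp_all [p215364, vec6_five] <;> omega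




lemma core2 {n : ℕ} (w : Equiv.Perm (Fin n)) (B A i k i' k' : Fin n)
    (hBA : B < A) (hvAB : w A < w B)
    (hAi : A < i) (hAi' : A < i') (hik : i < k) (hik' : i' < k')
    (hvBk : w B < w k) (hvBk' : w B < w k')
    (hvki : w k < w i) (hvk'i' : w k' < w i')
    (hii' : i < i') (hIK : i ≠ k') (hKI : k ≠ i') (hkk' : k ≠ k') :
    ContainsPattern w p21543 ∨ ContainsPattern w p215634 ∨ ContainsPattern w p214635 ∨
      ContainsPattern w p215364 ∨ ContainsPattern w p13254 := by
  have hneII : w i ≠ w i' := fun e => (hii'.ne) (w.injective e)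
  have hneKK : w k ≠ w k' := fun e => hkk' (w.injective e)
  have hneIK : w i ≠ w k' := fun e => hIK (w.injective e)
  rcases hKI.lt_or_gt with hki' | hki'
  · -- disjoint: i < k < i' < k'
    rcases hneII.lt_or_gt with hac | hca
    · rcases hneKK.lt_or_gt with hbd | hdb
      · rcases hneIK.lt_or_gt with had | hda
        · -- 2143 → 13254
          exact Or.inr (Or.inr (Or.inr (Or.inr
            (l13254 w A i k i' k' hAi hik hki' hik'
              (hvAB.trans hvBk) hvki had hvk'i'))))
        · -- 3142 → 215364
          exact Or.inr (Or.inr (Or.inr (Or.inl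
            (l215364 w B A i k i' k' hBA hAi hik hki' hik'
              hvAB hvBk hbd hda hac))))
      · -- w k' < w k : 321
        exact Or.inl (l21543 w B A i k k' hBA hAi hik (hki'.trans hik')
          hvAB hvBk' hdb hvki)
    · -- w i' < w i : 321
      exact Or.inl (l21543 w B A i i' k' hBA hAi (hik.trans hki') hik'
        hvAB hvBk' hvk'i' hca)
  · -- i' < k
    rcases hkk'.lt_or_gt with hkk | hkk
    · -- crossing: i < i' < k < k'
      rcases hneII.lt_or_gt with hac | hca
      · rcases hneKK.lt_or_gt with hbd | hdb
        · rcases hneIK.lt_or_gt with had | hda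
          · -- 2413 → 214635
            exact Or.inr (Or.inr (Or.inl
              (l214635 w B A i i' k k' hBA hAi hii' hki' hkk
                hvAB hvBk hvki had hvk'i')))
          · -- 3412 → 215634
            exact Or.inr (Or.inl
              (l215634 w B A i i' k k' hBA hAi hii' hki' hkk
                hvAB hvBk hbd hda hac))
        · -- w k' < w k : 321
          exact Or.inl (l21543 w B A i k k' hBA hAi hik hkk
            hvAB hvBk' hdb hvki)
      · -- w i' < w i : 321
        exact Or.inl (l21543 w B A i i' k' hBA hAi hii' hik'
          hvAB hvBk' hvk'i' hca)
    · -- nested: i < i' < k' < k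
      rcases hneII.lt_or_gt with hac | hca
      · rcases hneKK.lt_or_gt with hbd | hdb
        · -- w k < w k' : 321 on (i',k',k)
          exact Or.inl (l21543 w B A i' k' k hBA hAi' hik' hkk
            hvAB hvBk hbd hvk'i')
        · -- 3412 → 215634 on (i,i',k',k)
          exact Or.inr (Or.inl
            (l215634 w B A i i' k' k hBA hAi hii' hik' hkk
              hvAB hvBk' hdb hvki hac))
      · -- w i' < w i : 321
        exact Or.inl (l21543 w B A i i' k' hBA hAi hii' hik'
          hvAB hvBk' hvk'i' hca)

lemma core {n : ℕ} (w : Equiv.Perm (Fin n)) (B A i k i' k' : Fin n)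
    (hBA : B < A) (hvAB : w A < w B)
    (hAi : A < i) (hAi' : A < i') (hik : i < k) (hik' : i' < k')
    (hvBk : w B < w k) (hvBk' : w B < w k')
    (hvki : w k < w i) (hvk'i' : w k' < w i')
    (hii' : i ≠ i') (hkk' : k ≠ k') :
    ContainsPattern w p21543 ∨ ContainsPattern w p215634 ∨ ContainsPattern w p214635 ∨
      ContainsPattern w p215364 ∨ ContainsPattern w p13254 := by
  by_cases h1 : i = k'
  · rw [h1] at hik hvki
    exact Or.inl (l21543 w B A i' k' k hBA hAi' hik' hik hvAB hvBk hvki hvk'i')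
  · by_cases h2 : k = i'
    · rw [← h2] at hik' hvk'i'
      exact Or.inl (l21543 w B A i k k' hBA hAi hik hik' hvAB hvBk' hvk'i' hvki)
    · rcases hii'.lt_or_gt with h | h
      · exact core2 w B A i k i' k' hBA hvAB hAi hAi' hik hik' hvBk hvBk'
          hvki hvk'i' h h1 h2 hkk'
      · exact core2 w B A i' k' i k hBA hvAB hAi' hAi hik' hik hvBk' hvBk
          hvk'i' hvki h (fun e => h2 e.symm) (fun e => h1 e.symm) (fun e => hkk' e.symm)




theorem statement3aux {n : ℕ} (w : Equiv.Perm (Fin n)) (h : HasType1Obstruction w) :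
    ContainsPattern w p21543 ∨ ContainsPattern w p215634 ∨ ContainsPattern w p214635 ∨
      ContainsPattern w p215364 ∨ ContainsPattern w p13254 := by
  obtain ⟨⟨r, s⟩, hrs, ⟨i, j⟩, ⟨i', j'⟩, hp, hq, -, hrp1, hrp2, hrq1, hrq2, hii', hjj'⟩ := h
  obtain ⟨hdom, hess⟩ := hrs
  obtain ⟨hD, -⟩ := hdom
  obtain ⟨-, hsouth, heast⟩ := hess
  simp only [RotheDiagram, Set.mem_setOf_eq] at hD hp hq
  -- hD : s < w r ∧ r < w⁻¹ s
  have hrA : (r : ℕ) + 1 < n := by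
    have h1 : (r : ℕ) < ((w⁻¹ s : Fin n) : ℕ) := hD.2
    have h2 := (w⁻¹ s).isLt
    omega
  set A : Fin n := ⟨(r : ℕ) + 1, hrA⟩ with hAdef
  have hwA : w A ≤ s := by
    by_contra hgt
    push_neg at hgt
    apply hsouth A rfl
    refine ⟨hgt, ?_⟩
    have hle : A ≤ w⁻¹ s := by
      have h1 : (r : ℕ) < ((w⁻¹ s : Fin n) : ℕ) := hD.2
      simp only [Fin.le_def, hAdef]
      omega
    rcases eq_or_lt_of_le hle with he | hlt
    · have : w A = s := by rw [he]; exact w.apply_symm_apply s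
      exact absurd this (ne_of_gt hgt)
    · exact hlt
  have hsC : (s : ℕ) + 1 < n := by
    have h1 : (s : ℕ) < ((w r : Fin n) : ℕ) := hD.1
    have h2 := (w r).isLt
    omega
  set C : Fin n := ⟨(s : ℕ) + 1, hsC⟩ with hCdef
  set B : Fin n := w⁻¹ C with hBdef
  have hwB : w B = C := w.apply_symm_apply C
  have hBr : B ≤ r := by
    by_contra hgt
    push_neg at hgt
    apply heast C rfl
    refine ⟨?_, hgt⟩
    have hle : C ≤ w r := by
      have h1 : (s : ℕ) < ((w r : Fin n) : ℕ) := hD.1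
      simp only [Fin.le_def, hCdef]
      omega
    rcases eq_or_lt_of_le hle with he | hlt
    · have : B = r := by rw [hBdef, he]; exact w.symm_apply_apply r
      exact absurd this (ne_of_gt hgt)
    · exact hlt
  have hBA : B < A := lt_of_le_of_lt hBr (by simp only [Fin.lt_def, hAdef]; omega)
  have hvAB : w A < w B := by
    rw [hwB]
    exact lt_of_le_of_lt hwA (by simp only [Fin.lt_def, hCdef]; omega)
  have box : ∀ a b : Fin n, (b < w a ∧ a < w⁻¹ b) → r < a → s < b →
      A < a ∧ a < w⁻¹ b ∧ w B < w (w⁻¹ b) ∧ w (w⁻¹ b) < w a := by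
    intro a b hbox hra hsb
    obtain ⟨hba, haw⟩ := hbox
    have hwk : w (w⁻¹ b) = b := w.apply_symm_apply b
    have hAa : A < a := by
      have hne : A ≠ a := by
        intro he
        have hlt : s < w A := by rw [he]; exact hsb.trans hba
        exact absurd hwA (not_le.mpr hlt)
      have hle : A ≤ a := by
        have h1 : (r : ℕ) < (a : ℕ) := hra
        simp only [Fin.le_def, hAdef]
        omega
      exact lt_of_le_of_ne hle hne
    have hbne : b ≠ C := by
      intro he
      have h2 : a < B := by rw [hBdef, ← he]; exact haw
      exact absurd ((h2.trans hBA).trans hAa) (lt_irrefl a)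
    refine ⟨hAa, haw, ?_, ?_⟩
    · rw [hwB, hwk]
      have h1 : (s : ℕ) < (b : ℕ) := hsb
      have h2 : (b : ℕ) ≠ (s : ℕ) + 1 := fun he => hbne (Fin.ext (by simp [hCdef, he]))
      simp only [Fin.lt_def, hCdef]
      omega
    · rw [hwk]; exact hba
  obtain ⟨hAi, hik, hvBk, hvki⟩ := box i j hp hrp1 hrp2
  obtain ⟨hAi', hik', hvBk', hvk'i'⟩ := box i' j' hq hrq1 hrq2
  have hkk' : w⁻¹ j ≠ w⁻¹ j' := fun e => hjj' ((w⁻¹).injective e)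
  exact core w B A i (w⁻¹ j) i' (w⁻¹ j') hBA hvAB hAi hAi' hik hik'
    hvBk hvBk' hvki hvk'i' hii' hkk'


/-- a Type 1 obstruction forces containment of one of
21543, 215634, 214635, 215364, 13254. -/
theorem statement3 {n : ℕ} (w : Equiv.Perm (Fin n)) (h : HasType1Obstruction w) :
    ContainsPattern w p21543 ∨ ContainsPattern w p215634 ∨ ContainsPattern w p214635 ∨
      ContainsPattern w p215364 ∨ ContainsPattern w p13254 :=
  statement3aux w h

end CDGPaper
end

section
/- If the permutation w ∈ S_n has an obstruction of Type 2, then w contains at least one of the patterns 21543, 214635, 241635, 215364, 315264. -/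
open scoped Classical

universe u

namespace CDGPaper
lemma mem_rothe {n : ℕ} (w : Equiv.Perm (Fin n)) (i j : Fin n) :
    (i, j) ∈ RotheDiagram w ↔ j < w i ∧ i < w⁻¹ j := Iff.rfl

lemma mem_dom_iff {n : ℕ} (w : Equiv.Perm (Fin n)) (i j : Fin n) :
    (i, j) ∈ DominantPart w ↔ ∀ m, m ≤ i → j < w m := by
  constructor
  · rintro ⟨-, hr⟩ m hm
    by_contra h
    push_neg at h
    have hmem : m ∈ Finset.univ.filter fun k => k ≤ i ∧ w k ≤ j := by
      simp [hm, h]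
    have := Finset.card_eq_zero.mp hr
    rw [this] at hmem
    exact absurd hmem (Finset.notMem_empty m)
  · intro h
    have hr : rank w i j = 0 := by
      rw [rank, Finset.card_eq_zero, Finset.filter_eq_empty_iff]
      rintro x - ⟨hx1, hx2⟩
      exact absurd hx2 (not_le.mpr (h x hx1))
    refine ⟨⟨h i le_rfl, ?_⟩, hr⟩
    by_contra hc
    push_neg at hc
    have := h _ hc
    simp at this

lemma ess_rothe {n : ℕ} {w : Equiv.Perm (Fin n)} {i j : Fin n}
    (h : (i, j) ∈ EssentialSet w) : j < w i ∧ i < w⁻¹ j := h.1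

lemma ess_row {n : ℕ} {w : Equiv.Perm (Fin n)} {i j : Fin n}
    (h : (i, j) ∈ EssentialSet w) :
    ∃ i₁ : Fin n, (i₁ : ℕ) = (i : ℕ) + 1 ∧ w i₁ ≤ j := by
  obtain ⟨⟨h1, h2⟩, h3, -⟩ := h
  have hlt : (i : ℕ) + 1 < n := lt_of_le_of_lt (Nat.succ_le_of_lt h2) (w⁻¹ j).isLt
  refine ⟨⟨(i : ℕ) + 1, hlt⟩, rfl, ?_⟩
  have hnot := h3 ⟨(i : ℕ) + 1, hlt⟩ rfl
  rw [mem_rothe] at hnot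
  push_neg at hnot
  rcases le_or_gt (w ⟨(i : ℕ) + 1, hlt⟩) j with hle | hgt
  · exact hle
  · have hle2 := hnot hgt
    have heq : w⁻¹ j = ⟨(i : ℕ) + 1, hlt⟩ := by
      apply le_antisymm hle2
      rw [Fin.le_def]
      exact Nat.succ_le_of_lt h2
    have : w (w⁻¹ j) = j := w.apply_symm_apply j
    rw [heq] at this
    rw [this]

lemma ess_col {n : ℕ} {w : Equiv.Perm (Fin n)} {i j : Fin n}
    (h : (i, j) ∈ EssentialSet w) :
    ∃ j₁ : Fin n, (j₁ : ℕ) = (j : ℕ) + 1 ∧ w⁻¹ j₁ ≤ i := by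
  obtain ⟨⟨h1, h2⟩, -, h3⟩ := h
  have hlt : (j : ℕ) + 1 < n := lt_of_le_of_lt (Nat.succ_le_of_lt h1) (w i).isLt
  refine ⟨⟨(j : ℕ) + 1, hlt⟩, rfl, ?_⟩
  have hnot := h3 ⟨(j : ℕ) + 1, hlt⟩ rfl
  rw [mem_rothe] at hnot
  push_neg at hnot
  rcases lt_or_ge (⟨(j : ℕ) + 1, hlt⟩ : Fin n) (w i) with hgt | hle
  · exact hnot hgt
  · have hw : w i = ⟨(j : ℕ) + 1, hlt⟩ := by
      apply le_antisymm hle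
      rw [Fin.le_def]
      exact Nat.succ_le_of_lt h1
    have hww : w⁻¹ (⟨(j : ℕ) + 1, hlt⟩ : Fin n) = i := by
      rw [← hw]; exact w.symm_apply_apply i
    rw [hww]

lemma dom_row_dcl {n : ℕ} {w : Equiv.Perm (Fin n)} {k k' l : Fin n}
    (h : (k, l) ∈ DominantPart w) (hk : k' ≤ k) : (k', l) ∈ DominantPart w := by
  rw [mem_dom_iff] at h ⊢
  exact fun m hm => h m (le_trans hm hk)

lemma claimC {n : ℕ} {w : Equiv.Perm (Fin n)} {j j' : Fin n}
    (hmax : (Finset.univ.filter fun k => (k, j) ∈ DominantPart w).max =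
      (Finset.univ.filter fun k => (k, j') ∈ DominantPart w).max)
    {k : Fin n} (hk : (k, j) ∈ DominantPart w) : (k, j') ∈ DominantPart w := by
  classical
  have hmem : k ∈ Finset.univ.filter fun k => (k, j) ∈ DominantPart w := by simp [hk]
  have hle := Finset.le_max hmem
  rw [hmax] at hle
  set F' := Finset.univ.filter fun k => (k, j') ∈ DominantPart w with hF'
  rcases hmax' : F'.max with _ | k₀
  · rw [hmax'] at hle
    exact absurd hle (WithBot.not_coe_le_bot k)
  · have hk₀ : k₀ ∈ F' := Finset.mem_of_max hmax'
    rw [hmax'] at hle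
    have hkk₀ : k ≤ k₀ := WithBot.coe_le_coe.mp hle
    have : (k₀, j') ∈ DominantPart w := by
      simpa [hF'] using hk₀
    exact dom_row_dcl this hkk₀

lemma rothe_inv {n : ℕ} (w : Equiv.Perm (Fin n)) (i j : Fin n) :
    (i, j) ∈ RotheDiagram w⁻¹ ↔ (j, i) ∈ RotheDiagram w := by
  simp only [mem_rothe, inv_inv]
  exact and_comm

lemma rank_inv {n : ℕ} (w : Equiv.Perm (Fin n)) (i j : Fin n) :
    rank w⁻¹ j i = rank w i j := by
  unfold rank
  apply Finset.card_bij' (fun k _ => w⁻¹ k) (fun k _ => w k)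
  · intro a ha
    simp only [Finset.mem_filter, Finset.mem_univ, true_and] at ha ⊢
    exact ⟨ha.2, by simpa using ha.1⟩
  · intro a ha
    simp only [Finset.mem_filter, Finset.mem_univ, true_and] at ha ⊢
    exact ⟨ha.2, by simpa using ha.1⟩
  · intro a _; simp
  · intro a _; simp

lemma ess_inv {n : ℕ} (w : Equiv.Perm (Fin n)) (i j : Fin n) :
    (i, j) ∈ EssentialSet w⁻¹ ↔ (j, i) ∈ EssentialSet w := by
  constructor
  · rintro ⟨h1, h2, h3⟩
    refine ⟨(rothe_inv w i j).mp h1, ?_, ?_⟩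
    · intro i' hi' hm
      exact h3 i' hi' ((rothe_inv w i i').mpr hm)
    · intro j' hj' hm
      exact h2 j' hj' ((rothe_inv w j' j).mpr hm)
  · rintro ⟨h1, h2, h3⟩
    refine ⟨(rothe_inv w i j).mpr h1, ?_, ?_⟩
    · intro i' hi' hm
      exact h3 i' hi' ((rothe_inv w i' j).mp hm)
    · intro j' hj' hm
      exact h2 j' hj' ((rothe_inv w i j').mp hm)

lemma dom_inv {n : ℕ} (w : Equiv.Perm (Fin n)) (i j : Fin n) :
    (i, j) ∈ DominantPart w⁻¹ ↔ (j, i) ∈ DominantPart w := by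
  constructor
  · rintro ⟨h1, h2⟩
    exact ⟨(rothe_inv w i j).mp h1, by rw [← rank_inv w j i]; exact h2⟩
  · rintro ⟨h1, h2⟩
    exact ⟨(rothe_inv w i j).mpr h1, by rw [rank_inv w j i]; exact h2⟩

lemma pattern_inv {n k : ℕ} {w : Equiv.Perm (Fin n)} {v : Equiv.Perm (Fin k)}
    (h : ContainsPattern w v) : ContainsPattern w⁻¹ v⁻¹ := by
  obtain ⟨f, hf, hord⟩ := h
  refine ⟨fun b => w (f (v⁻¹ b)), ?_, ?_⟩
  · intro x y hxy
    have := (hord (v⁻¹ x) (v⁻¹ y)).mp (by simpa using hxy)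
    exact this
  · intro a b
    simp only [Equiv.Perm.inv_def, Equiv.symm_apply_apply]
    constructor
    · intro hab
      simpa using hf.lt_iff_lt.mpr hab
    · intro hab
      have : f (v⁻¹ a) < f (v⁻¹ b) := by simpa using hab
      exact hf.lt_iff_lt.mp this

lemma p21543_inv : p21543⁻¹ = p21543 :=
  inv_eq_of_mul_eq_one_right (Equiv.ext fun x => by fin_cases x <;> rfl)

lemma p214635_inv : p214635⁻¹ = p215364 :=
  inv_eq_of_mul_eq_one_right (Equiv.ext fun x => by fin_cases x <;> rfl)

lemma p241635_inv : p241635⁻¹ = p315264 :=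
  inv_eq_of_mul_eq_one_right (Equiv.ext fun x => by fin_cases x <;> rfl)

lemma core' {n : ℕ} {w : Equiv.Perm (Fin n)} {r s i j j' : Fin n}
    (hdom : (r, s) ∈ DominantPart w) (hess : (r, s) ∈ EssentialSet w)
    (hj : (i, j) ∈ EssentialSet w) (hj' : (i, j') ∈ EssentialSet w)
    (hjj' : j < j') (hri : r < i) (hsj : s < j)
    (hmax : (Finset.univ.filter fun k => (k, j) ∈ DominantPart w).max =
      (Finset.univ.filter fun k => (k, j') ∈ DominantPart w).max) :
    ContainsPattern w p21543 ∨ ContainsPattern w p214635 ∨ ContainsPattern w p241635 := by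
  have hD : ∀ m, m ≤ r → s < w m := (mem_dom_iff w r s).mp hdom
  obtain ⟨r₁, hr₁v, hwr₁⟩ := ess_row hess
  obtain ⟨s₁, hs₁v, hcle⟩ := ess_col hess
  obtain ⟨j₁, hj₁v, hble⟩ := ess_col hj
  set c := w⁻¹ s₁ with hc
  set b := w⁻¹ j₁ with hb
  set a := w⁻¹ j with ha
  set a' := w⁻¹ j' with ha'
  have hwa : w a = j := w.apply_symm_apply j
  have hwa' : w a' = j' := w.apply_symm_apply j'
  have hwb : w b = j₁ := w.apply_symm_apply j₁
  have hwc : w c = s₁ := w.apply_symm_apply s₁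
  -- basic coordinates as naturals
  have hia : (i : ℕ) < a := (ess_rothe hj).2
  have hia' : (i : ℕ) < a' := (ess_rothe hj').2
  have hwij : (j : ℕ) < w i := (ess_rothe hj).1
  have hwij' : (j' : ℕ) < w i := (ess_rothe hj').1
  have hcr : (c : ℕ) ≤ r := hcle
  have hbi : (b : ℕ) ≤ i := hble
  have hriN : (r : ℕ) < i := hri
  have hsjN : (s : ℕ) < j := hsj
  have hjj'N : (j : ℕ) < j' := hjj'
  have hwr₁N : (w r₁ : ℕ) ≤ s := hwr₁
  -- s + 1 < j
  have hjs₁ : j ≠ s₁ := by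
    intro h
    have : a = c := by rw [ha, hc, h]
    have : (a : ℕ) = c := congrArg _ this
    omega
  have hs1j : (s : ℕ) + 1 < j := by
    have := Fin.val_ne_of_ne hjs₁
    omega
  -- j + 1 < j'
  have hj₁j' : j₁ ≠ j' := by
    intro h
    have : b = a' := by rw [hb, ha', h]
    have : (b : ℕ) = a' := congrArg _ this
    omega
  have hj1j' : (j : ℕ) + 1 < j' := by
    have := Fin.val_ne_of_ne hj₁j'
    omega
  -- r₁ < i
  have hr₁i : (r₁ : ℕ) < i := by
    have : r₁ ≠ i := by
      intro h
      rw [h] at hwr₁N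
      omega
    have := Fin.val_ne_of_ne this
    omega
  -- b < i
  have hbiN : (b : ℕ) < i := by
    have : b ≠ i := by
      intro h
      rw [h] at hwb
      have : (w i : ℕ) = j₁ := congrArg _ hwb
      omega
    have := Fin.val_ne_of_ne this
    omega
  have haa' : a ≠ a' := by
    intro h
    have : w a = w a' := by rw [h]
    rw [hwa, hwa'] at this
    exact absurd this (Fin.ne_of_lt hjj')
  -- value chain pieces as naturals
  have hwcv : (w c : ℕ) = (s : ℕ) + 1 := by rw [hwc]; exact hs₁v
  have hwav : (w a : ℕ) = (j : ℕ) := by rw [hwa]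
  have hwa'v : (w a' : ℕ) = (j' : ℕ) := by rw [hwa']
  have hwbv : (w b : ℕ) = (j : ℕ) + 1 := by rw [hwb]; exact hj₁v
  rcases lt_or_gt_of_ne haa' with hlt | hgt
  · -- a < a' : patterns 214635 / 241635
    have haa'N : (a : ℕ) < a' := hlt
    have hbr₁ : b ≠ r₁ := by
      intro h
      rw [h] at hwbv
      omega
    rcases lt_or_gt_of_ne hbr₁ with hblt | hbgt
    · -- b < r₁, so b ≤ r : pattern 241635
      have hbltN : (b : ℕ) < r₁ := hblt
      have hbr : (b : ℕ) ≤ r := by omega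
      have hbrF : b ≤ r := hbr
      -- extract t
      have hdomb' : (b, j') ∉ DominantPart w := by
        rw [mem_dom_iff]
        push_neg
        exact ⟨b, le_refl b, by rw [Fin.le_def]; omega⟩
      have hdomb : (b, j) ∉ DominantPart w := fun hmem => hdomb' (claimC hmax hmem)
      rw [mem_dom_iff] at hdomb
      push_neg at hdomb
      obtain ⟨t, htb, htj⟩ := hdomb
      have htjN : (w t : ℕ) ≤ j := htj
      have htbN : (t : ℕ) ≤ b := htb
      have hst : (s : ℕ) < w t := hD t (le_trans htb hbrF)
      have hta : (w t : ℕ) < j := by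
        rcases Nat.lt_or_ge (w t : ℕ) (j : ℕ) with h | h
        · exact h
        · exfalso
          have : w t = j := Fin.ext (by omega)
          have : t = a := by rw [ha, ← this, Equiv.Perm.inv_def, w.symm_apply_apply]
          have : (t : ℕ) = a := congrArg _ this
          omega
      have htbN' : (t : ℕ) < b := by
        have : t ≠ b := by
          intro h
          rw [h] at htjN
          omega
        have := Fin.val_ne_of_ne this
        omega
      refine Or.inr (Or.inr ⟨![t, b, r₁, i, a, a'], ?_, ?_⟩)
      · intro x y hxy
        fin_cases x <;> fin_cases y <;>
          simp only [Matrix.cons_val_zero', Matrix.cons_val_succ', Fin.mk_lt_mk,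
            Fin.lt_def] at hxy ⊢ <;> omega
      · intro x y
        fin_cases x <;> fin_cases y <;>
          simp only [p241635, Equiv.ofBijective_apply, Matrix.cons_val_zero',
            Matrix.cons_val_succ', Fin.mk_lt_mk, Fin.lt_def] <;>
          · constructor
            · intro hlt2; omega
            · intro hlt2; omega
    · -- r₁ < b : pattern 214635
      have hbgtN : (r₁ : ℕ) < b := hbgt
      have hcr₁ : (c : ℕ) < r₁ := by omega
      refine Or.inr (Or.inl ⟨![c, r₁, b, i, a, a'], ?_, ?_⟩)
      · intro x y hxy
        fin_cases x <;> fin_cases y <;>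
          simp only [Matrix.cons_val_zero', Matrix.cons_val_succ', Fin.mk_lt_mk,
            Fin.lt_def] at hxy ⊢ <;> omega
      · intro x y
        fin_cases x <;> fin_cases y <;>
          simp only [p214635, Equiv.ofBijective_apply, Matrix.cons_val_zero',
            Matrix.cons_val_succ', Fin.mk_lt_mk, Fin.lt_def] <;>
          · constructor
            · intro hlt2; omega
            · intro hlt2; omega
  · -- a' < a : pattern 21543
    have ha'aN : (a' : ℕ) < a := hgt
    have hcr₁ : (c : ℕ) < r₁ := by omega
    refine Or.inl ⟨![c, r₁, i, a', a], ?_, ?_⟩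
    · intro x y hxy
      fin_cases x <;> fin_cases y <;>
        simp only [Matrix.cons_val_zero', Matrix.cons_val_succ', Fin.mk_lt_mk,
          Fin.lt_def] at hxy ⊢ <;> omega
    · intro x y
      fin_cases x <;> fin_cases y <;>
        simp only [p21543, Equiv.ofBijective_apply, Matrix.cons_val_zero',
          Matrix.cons_val_succ', Fin.mk_lt_mk, Fin.lt_def] <;>
        · constructor
          · intro hlt2; omega
          · intro hlt2; omega


/-- a Type 2 obstruction forces containment of one of
21543, 214635, 241635, 215364, 315264. -/
theorem statement4 {n : ℕ} (w : Equiv.Perm (Fin n)) (h : HasType2Obstruction w) :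
    ContainsPattern w p21543 ∨ ContainsPattern w p214635 ∨ ContainsPattern w p241635 ∨
      ContainsPattern w p215364 ∨ ContainsPattern w p315264 := by
  obtain ⟨⟨r, s⟩, hrs, hcase⟩ := h
  have hdom : (r, s) ∈ DominantPart w := hrs.1
  have hess : (r, s) ∈ EssentialSet w := hrs.2
  rcases hcase with ⟨i, j, j', hj, hj', hne, hri, hsj, hsj', hmax⟩ |
    ⟨i, i', j, hij, hi'j, hne, hri, hri', hsj, hmax⟩
  · rcases hne.lt_or_gt with hlt | hlt
    · rcases core' hdom hess hj hj' hlt hri hsj hmax with h1 | h1 | h1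
      · exact Or.inl h1
      · exact Or.inr (Or.inl h1)
      · exact Or.inr (Or.inr (Or.inl h1))
    · rcases core' hdom hess hj' hj hlt hri hsj' hmax.symm with h1 | h1 | h1
      · exact Or.inl h1
      · exact Or.inr (Or.inl h1)
      · exact Or.inr (Or.inr (Or.inl h1))
  · -- column case: transpose via w⁻¹
    have hdom' : (s, r) ∈ DominantPart w⁻¹ := (dom_inv w s r).mpr hdom
    have hess' : (s, r) ∈ EssentialSet w⁻¹ := (ess_inv w s r).mpr hess
    have hji : (j, i) ∈ EssentialSet w⁻¹ := (ess_inv w j i).mpr hij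
    have hji' : (j, i') ∈ EssentialSet w⁻¹ := (ess_inv w j i').mpr hi'j
    have hfil : ∀ m : Fin n, (Finset.univ.filter fun k => (k, m) ∈ DominantPart w⁻¹) =
        Finset.univ.filter fun l => (m, l) ∈ DominantPart w := by
      intro m
      apply Finset.filter_congr
      intro k _
      simp only [dom_inv, eq_iff_iff]
    have hmax' : (Finset.univ.filter fun k => (k, i) ∈ DominantPart w⁻¹).max =
        (Finset.univ.filter fun k => (k, i') ∈ DominantPart w⁻¹).max := by
      rw [hfil i, hfil i', hmax]
    have hpat : ContainsPattern w⁻¹ p21543 ∨ ContainsPattern w⁻¹ p214635 ∨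
        ContainsPattern w⁻¹ p241635 := by
      rcases hne.lt_or_gt with hlt | hlt
      · exact core' hdom' hess' hji hji' hlt hsj hri hmax'
      · exact core' hdom' hess' hji' hji hlt hsj hri' hmax'.symm
    rcases hpat with h1 | h1 | h1
    · have := pattern_inv h1
      rw [inv_inv, p21543_inv] at this
      exact Or.inl this
    · have := pattern_inv h1
      rw [inv_inv, p214635_inv] at this
      exact Or.inr (Or.inr (Or.inr (Or.inl this)))
    · have := pattern_inv h1
      rw [inv_inv, p241635_inv] at this
      exact Or.inr (Or.inr (Or.inr (Or.inr this)))

end CDGPaper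
end

section
/- Let w ∈ S_n contain v ∈ S_k via indices i_1 < i_2 < ⋯ < i_k (so that w(i_a) < w(i_b) exactly when v(a) < v(b)), and let c_1 < c_2 < ⋯ < c_k be the values w(i_1), …, w(i_k) listed in increasing order. Then for all a, b ∈ [k], (a,b) ∈ D_v if and only if (i_a, c_b) ∈ D_w; that is, the Rothe diagram of v is obtained from that of w by restricting to the rows i_1, …, i_k and the columns w(i_1), …, w(i_k). -/
open scoped Classical

universe u

namespace CDGPaper
/-- if `w` contains `v` via `i_1 < ⋯ < i_k` and `c` enumerates the values
`w(i_1), …, w(i_k)` in increasing order, then `(a,b) ∈ D_v ↔ (i_a, c_b) ∈ D_w`. -/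
theorem statement14 {n k : ℕ} (w : Equiv.Perm (Fin n)) (v : Equiv.Perm (Fin k))
    (f : Fin k → Fin n) (hf : StrictMono f)
    (hpat : ∀ a b : Fin k, v a < v b ↔ w (f a) < w (f b))
    (c : Fin k → Fin n) (hc : StrictMono c)
    (hrange : Set.range c = Set.range (w ∘ f)) :
    ∀ a b : Fin k, (a, b) ∈ RotheDiagram v ↔ (f a, c b) ∈ RotheDiagram w := by
  have hmono : StrictMono (w ∘ f ∘ v.symm) := by
    intro x y hxy
    simp only [Function.comp_apply]
    rw [← hpat]
    simpa using hxy
  have hceq : c = ⇑w ∘ f ∘ ⇑v.symm := by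
    refine (@StrictMono.range_inj (Fin k) (Fin n) _ _
      (inferInstance : WellFoundedLT (Fin k)) c (⇑w ∘ f ∘ ⇑v.symm) hc hmono).1 ?_
    rw [hrange]
    ext x
    constructor
    · rintro ⟨a, rfl⟩; exact ⟨v a, by simp⟩
    · rintro ⟨a, rfl⟩; exact ⟨v.symm a, rfl⟩
  intro a b
  simp only [RotheDiagram, Set.mem_setOf_eq, hceq, Function.comp_apply,
    Equiv.Perm.inv_def, Equiv.symm_apply_apply]
  constructor
  · rintro ⟨h1, h2⟩
    exact ⟨(hpat (v.symm b) a).1 (by simpa using h1),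
      hf (by simpa [Equiv.Perm.inv_def] using h2)⟩
  · rintro ⟨h1, h2⟩
    exact ⟨by simpa using (hpat (v.symm b) a).2 h1,
      by simpa [Equiv.Perm.inv_def] using hf.lt_iff_lt.1 h2⟩

end CDGPaper
end
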